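/- For every natural number n and every subset s of (Fin n → ℚ) that is definable without parameters in the first-order language with one binary relation symbol, interpreted as the order ≤ on ℚ, the following holds: if s contains an injective tuple, then for every injective tuple x : Fin n → ℚ there exists a permutation σ of Fin n with x ∘ σ ∈ s. -/

import Mathlib

open FirstOrder Language

attribute [local instance] FirstOrder.Language.orderStructure

theorem statement14 (n : ℕ) (s : Set (Fin n → ℚ)) (h : Set.Definable ∅ Language.order s)
    (hex : ∃ x ∈ s, Function.Injective x) :
    ∀ x : Fin n → ℚ, Function.Injective x → ∃ σ : Equiv.Perm (Fin n), x ∘ σ ∈ s := by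
  classical
  haveI : Language.order.OrderedStructure ℚ := ⟨fun _ => Iff.rfl⟩
  intro x hx
  obtain ⟨y, hys, hy⟩ := hex
  rw [Set.empty_definable_iff] at h
  obtain ⟨φ, rfl⟩ := h
  have hU : Language.order.IsUltrahomogeneous ℚ :=
    (Language.isFraisseLimit_of_countable_nonempty_dlo ℚ).ultrahomogeneous
  set A : Finset ℚ := Finset.univ.image x with hAdef
  set B : Finset ℚ := Finset.univ.image y with hBdef
  have hA : A.card = n := by
    rw [hAdef, Finset.card_image_of_injective _ hx, Finset.card_univ, Fintype.card_fin]
  have hB : B.card = n := by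
    rw [hBdef, Finset.card_image_of_injective _ hy, Finset.card_univ, Fintype.card_fin]
  set S : Language.order.Substructure ℚ :=
    Substructure.closure Language.order (B : Set ℚ) with hSdef
  have hSB : (S : Set ℚ) = (B : Set ℚ) :=
    Substructure.closure_eq_of_isRelational Language.order (B : Set ℚ)
  have hSfg : S.FG := Substructure.fg_closure B.finite_toSet
  -- order embedding S ↪o ℚ sending the k-th smallest element of B to
  -- the k-th smallest element of A
  let e1 : S ≃o (B : Set ℚ) := OrderIso.setCongr (S : Set ℚ) (B : Set ℚ) hSB
  let e2 : (B : Set ℚ) ≃o Fin n := (B.orderIsoOfFin hB).symm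
  let e3 : Fin n ≃o (A : Set ℚ) := A.orderIsoOfFin hA
  let e4 : (A : Set ℚ) ↪o ℚ := OrderEmbedding.subtype _
  let f0 : S ↪o ℚ :=
    (e1.toOrderEmbedding.trans e2.toOrderEmbedding).trans (e3.toOrderEmbedding.trans e4)
  letI : Language.order.Structure S := Substructure.inducedStructure
  let f : S ↪[Language.order] ℚ := StrongHomClass.toEmbedding f0
  obtain ⟨g, hg⟩ := hU S hSfg f
  -- each g (y i) lies in A
  have hgy : ∀ i, g (y i) ∈ A := by
    intro i
    have hyS : y i ∈ S := by
      rw [hSdef, Substructure.mem_closure_iff_of_isRelational]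
      simp [hBdef]
    have : f ⟨y i, hyS⟩ = g (y i) := by
      have := congr_fun (congr_arg DFunLike.coe hg) ⟨y i, hyS⟩
      simpa using this
    rw [← this]
    exact (e3 (e2 (e1 ⟨y i, hyS⟩))).2
  -- define the permutation
  have hex' : ∀ i, ∃ j, x j = g (y i) := by
    intro i
    have := hgy i
    rw [hAdef, Finset.mem_image] at this
    obtain ⟨j, _, hj⟩ := this
    exact ⟨j, hj⟩
  choose σ0 hσ0 using hex'
  have hσ0inj : Function.Injective σ0 := by
    intro i i' hii'
    apply hy
    apply g.injective
    rw [← hσ0 i, ← hσ0 i', hii']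
  let σ : Equiv.Perm (Fin n) := Equiv.ofBijective σ0 (Finite.injective_iff_bijective.mp hσ0inj)
  refine ⟨σ, ?_⟩
  have hcomp : x ∘ σ = g ∘ y := by
    funext i
    exact hσ0 i
  show φ.Realize (x ∘ σ)
  rw [hcomp]
  exact (StrongHomClass.realize_formula g φ).mpr hys
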